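/- Let (M, Φ, φ) be a quantum dynamical system with φ-adjoint Φ♯, and let D_∞ = ⋂_{k∈ℤ} D_{Φ_k} where Φ_k = Φ^k for k ≥ 0 and Φ_k = Φ♯^{|k|} for k < 0. Then Φ(D_∞) ⊆ D_∞ and Φ♯(D_∞) ⊆ D_∞, and the restriction Φ_∞ of Φ to D_∞ is a *-automorphism with inverse the restriction of Φ♯, i.e., Φ(Φ♯(d)) = Φ♯(Φ(d)) = d for all d ∈ D_∞. -/

import Mathlib

open scoped ComplexOrder

section
variable {M : Type*} [NormedRing M] [StarRing M] [CStarRing M] [NormedAlgebra ℂ M]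
  [StarModule ℂ M] [CompleteSpace M] [PartialOrder M] [StarOrderedRing M]

/-- The multiplicative domain of a linear map `Φ`. -/
def multDomain (Φ : Module.End ℂ M) : Set M :=
  {a : M | Φ (star a * a) = Φ (star a) * Φ a ∧ Φ (a * star a) = Φ a * Φ (star a)}

/-- `φ` is a state: unital and positive. -/
def IsState (φ : M →ₗ[ℂ] ℂ) : Prop :=
  φ 1 = 1 ∧ ∀ a : M, 0 ≤ φ (star a * a)

/-- `φ` is faithful. -/
def IsFaithful (φ : M →ₗ[ℂ] ℂ) : Prop :=
  ∀ a : M, φ (star a * a) = 0 → a = 0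

/-- `Φ` is a unital Schwartz map. -/
def IsSchwartz (Φ : Module.End ℂ M) : Prop :=
  Φ 1 = 1 ∧ ∀ a : M, star (Φ a) * Φ a ≤ Φ (star a * a)

/-- The `φ`-orthogonal complement of a set `R`. -/
def phiPerp (φ : M →ₗ[ℂ] ℂ) (R : Set M) : Set M :=
  {a : M | ∀ x ∈ R, φ (star a * x) = 0}


/-- The two-sided family of dynamics: `Φ^k` for `k ≥ 0` and `(Φ♯)^|k|` for `k < 0`. -/
noncomputable def phiZ (Φ Ψ : Module.End ℂ M) : ℤ → Module.End ℂ M :=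
  fun k => if 0 ≤ k then Φ ^ k.toNat else Ψ ^ (-k).toNat

/-- The algebra of effective observables `D_∞ = ⋂_{k ∈ ℤ} D_{Φ_k}`. -/
def Dinf (Φ Ψ : Module.End ℂ M) : Set M := ⋂ k : ℤ, multDomain (phiZ Φ Ψ k)

namespace DinfAux
open Complex

variable {T S Φ Ψ : Module.End ℂ M} {φ : M →ₗ[ℂ] ℂ}

lemma ex_sq {a : M} (ha : 0 ≤ a) : ∃ b : M, a = star b * b := by
  letI : CStarAlgebra M := {}
  exact ⟨CFC.sqrt a, by rw [IsSelfAdjoint.of_nonneg (CFC.sqrt_nonneg a), CFC.sqrt_mul_sqrt_self a ha]⟩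

lemma pos (hT : IsSchwartz T) {a : M} (ha : 0 ≤ a) : 0 ≤ T a := by
  obtain ⟨b, rfl⟩ := ex_sq ha
  exact le_trans (star_mul_self_nonneg _) (hT.2 b)

lemma mono (hT : IsSchwartz T) {a b : M} (h : a ≤ b) : T a ≤ T b := by
  have := pos hT (sub_nonneg.2 h)
  rw [map_sub] at this
  exact sub_nonneg.1 this

lemma sa (hT : IsSchwartz T) {x : M} (hx : IsSelfAdjoint x) : IsSelfAdjoint (T x) := by
  letI : CStarAlgebra M := {}
  have h1 : (0:M) ≤ algebraMap ℝ M ‖x‖ := by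
    rw [Algebra.algebraMap_eq_smul_one]
    exact smul_nonneg (norm_nonneg x) (by simpa using star_mul_self_nonneg (1:M))
  have h2 : (0:M) ≤ algebraMap ℝ M ‖x‖ - x := sub_nonneg.2 hx.le_algebraMap_norm_self
  have hx' : x = algebraMap ℝ M ‖x‖ - (algebraMap ℝ M ‖x‖ - x) := (sub_sub_cancel _ _).symm
  rw [hx', map_sub]
  exact (IsSelfAdjoint.of_nonneg (pos hT h1)).sub (IsSelfAdjoint.of_nonneg (pos hT h2))

lemma star_map (hT : IsSchwartz T) (a : M) : T (star a) = star (T a) := by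
  obtain ⟨x, y, hx, hy, ha, hsa⟩ : ∃ x y : M, IsSelfAdjoint x ∧ IsSelfAdjoint y ∧
      a = x + Complex.I • y ∧ star a = x - Complex.I • y := by
    refine ⟨(2:ℂ)⁻¹ • (a + star a), (-(Complex.I)/2) • (a - star a), ?_, ?_, ?_, ?_⟩
    · rw [IsSelfAdjoint, star_smul, star_add, star_star]
      simp [add_comm]
    · rw [IsSelfAdjoint, star_smul, star_sub, star_star]
      rw [show star (-(Complex.I)/2) = ((Complex.I)/2 : ℂ) by simp [Complex.ext_iff]]
      match_scalars <;> simp <;> ring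
    · match_scalars <;> simp [Complex.ext_iff] <;> ring
    · match_scalars <;> simp [Complex.ext_iff] <;> ring
  rw [hsa, map_sub, map_smul]
  conv_rhs => rw [ha]
  rw [map_add, map_smul, star_add, star_smul, (sa hT hx).star_eq, (sa hT hy).star_eq]
  rw [show star Complex.I = -Complex.I by simp, sub_eq_add_neg, neg_smul]

lemma phi_pos (hφ : IsState φ) {x : M} (hx : 0 ≤ x) : 0 ≤ φ x := by
  obtain ⟨b, rfl⟩ := ex_sq hx; exact hφ.2 b

lemma phi_mono (hφ : IsState φ) {x y : M} (h : x ≤ y) : φ x ≤ φ y := by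
  have := phi_pos hφ (sub_nonneg.2 h)
  rw [map_sub] at this
  exact sub_nonneg.1 this

lemma Bexp (φ : M →ₗ[ℂ] ℂ) (t : ℂ) (x y : M) :
    φ (star (x + t • y) * (x + t • y))
      = φ (star x * x) + t * φ (star x * y) + (starRingEnd ℂ) t * φ (star y * x)
        + (t * (starRingEnd ℂ) t) * φ (star y * y) := by
  simp only [star_add, star_smul, add_mul, mul_add, smul_mul_assoc, mul_smul_comm, smul_smul,
    map_add, map_smul, smul_eq_mul, RCLike.star_def]
  ring

lemma Bherm (hφ : IsState φ) (x y : M) :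
    φ (star y * x) = (starRingEnd ℂ) (φ (star x * y)) := by
  have e1 := Bexp φ 1 x y
  have e2 := Bexp φ Complex.I x y
  have n1 := hφ.2 (x + (1:ℂ) • y)
  have n2 := hφ.2 (x + Complex.I • y)
  have nx := hφ.2 x
  have ny := hφ.2 y
  rw [e1, Complex.nonneg_iff] at n1
  rw [e2, Complex.nonneg_iff] at n2
  rw [Complex.nonneg_iff] at nx ny
  set p := φ (star x * y)
  set q := φ (star y * x)
  rw [Complex.ext_iff]
  constructor
  · have := n2.2
    simp [Complex.add_im, Complex.mul_im, ← nx.2, ← ny.2, Complex.ext_iff] at this ⊢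
    linarith
  · have := n1.2
    simp [Complex.add_im, Complex.mul_im, ← nx.2, ← ny.2, Complex.ext_iff] at this ⊢
    linarith

lemma herm (hφ : IsState φ) (a : M) : φ (star a) = (starRingEnd ℂ) (φ a) := by
  simpa using Bherm hφ 1 a

lemma real_sq (hφ : IsState φ) (a : M) :
    (starRingEnd ℂ) (φ (star a * a)) = φ (star a * a) :=
  (Bherm hφ a a).symm

lemma faith' (hfaith : IsFaithful φ) {p : M} (hp : 0 ≤ p) (h : φ p = 0) : p = 0 := by
  obtain ⟨b, rfl⟩ := ex_sq hp
  rw [hfaith b h]; simp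

lemma null (hφ : IsState φ) (hT : IsSchwartz T) (hTi : ∀ a, φ (T a) = φ a)
    {a : M} (ha : φ (star (T a) * T a) = φ (star a * a)) (b : M) :
    φ (star (T a) * T b) = φ (star a * b) := by
  have Fpos : ∀ u : M, (0:ℂ) ≤ φ (star u * u) - φ (star (T u) * T u) := by
    intro u
    rw [sub_nonneg, ← hTi (star u * u)]
    exact phi_mono hφ (hT.2 u)
  have hFaa : φ (star a * a) - φ (star (T a) * T a) = 0 := by rw [ha, sub_self]
  have expand : ∀ t : ℂ, (0:ℂ) ≤ (φ (star b * b) - φ (star (T b) * T b))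
      + t * (starRingEnd ℂ) (φ (star a * b) - φ (star (T a) * T b))
      + (starRingEnd ℂ) t * (φ (star a * b) - φ (star (T a) * T b)) := by
    intro t
    have h0 := Fpos (b + t • a)
    rw [Bexp φ t b a, map_add, map_smul, Bexp φ t (T b) (T a)] at h0
    have hba : φ (star b * a) - φ (star (T b) * T a)
        = (starRingEnd ℂ) (φ (star a * b) - φ (star (T a) * T b)) := by
      rw [map_sub, ← Bherm hφ a b, ← Bherm hφ (T a) (T b)]
    refine le_of_le_of_eq h0 ?_
    linear_combination t * hba + (t * (starRingEnd ℂ) t) * hFaa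
  have hc0 : φ (star a * b) - φ (star (T a) * T b) = 0 := by
    by_contra hne
    have hns : 0 < Complex.normSq (φ (star a * b) - φ (star (T a) * T b)) :=
      Complex.normSq_pos.2 hne
    set cc := φ (star a * b) - φ (star (T a) * T b) with hcc
    set B0 := φ (star b * b) - φ (star (T b) * T b) with hB0
    set s : ℝ := (B0.re + 1) / (2 * Complex.normSq cc) with hs
    have h := expand (-(s:ℂ) * cc)
    have heq : B0 + (-(s:ℂ) * cc) * (starRingEnd ℂ) cc + (starRingEnd ℂ) (-(s:ℂ) * cc) * cc
        = B0 - ((2 * s * Complex.normSq cc : ℝ) : ℂ) := by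
      rw [map_mul, map_neg, Complex.conj_ofReal, Complex.ofReal_mul, Complex.ofReal_mul,
        Complex.ofReal_ofNat]
      linear_combination (-(2:ℂ) * (s:ℂ)) * Complex.mul_conj cc
    rw [heq, Complex.nonneg_iff] at h
    have hre := h.1
    rw [Complex.sub_re, Complex.ofReal_re] at hre
    have h2 : 2 * s * Complex.normSq cc = B0.re + 1 := by
      rw [hs]; field_simp
    linarith
  have := sub_eq_zero.1 hc0
  exact this.symm

lemma mem_of_good (hφ : IsState φ) (hfaith : IsFaithful φ) (hT : IsSchwartz T)
    (hTi : ∀ x, φ (T x) = φ x) {a : M}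
    (h : φ (star (T a) * T a) = φ (star a * a)) :
    T (star a * a) = T (star a) * T a := by
  have hpos : 0 ≤ T (star a * a) - star (T a) * T a := sub_nonneg.2 (hT.2 a)
  have hz : φ (T (star a * a) - star (T a) * T a) = 0 := by
    rw [map_sub, hTi, h, sub_self]
  have h2 := sub_eq_zero.1 (faith' hfaith hpos hz)
  rw [h2, star_map hT]

lemma good_of_mem (hT : IsSchwartz T) (hTi : ∀ x, φ (T x) = φ x) {a : M}
    (h : T (star a * a) = T (star a) * T a) :
    φ (star (T a) * T a) = φ (star a * a) := by
  rw [← star_map hT, ← h, hTi]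

lemma rev (hφ : IsState φ) (hfaith : IsFaithful φ) (hΦs : IsSchwartz Φ) (hΨs : IsSchwartz Ψ)
    (hstat : ∀ x : M, φ (Φ x) = φ x) (hstatΨ : ∀ x : M, φ (Ψ x) = φ x)
    (hadj : ∀ a b : M, φ (b * Φ a) = φ (Ψ b * a))
    {d : M} (hd : Φ (star d * d) = Φ (star d) * Φ d) :
    Ψ (Φ d) = d := by
  have h0 : φ (star (Φ d) * Φ d) = φ (star d * d) := by
    rw [← star_map hΦs, ← hd, hstat]
  have h1 : φ (star (Ψ (Φ d)) * d) = φ (star d * d) := by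
    rw [← star_map hΨs, ← hadj d (star (Φ d))]
    exact h0
  have h2 : φ (star d * Ψ (Φ d)) = φ (star d * d) := by
    rw [Bherm hφ (Ψ (Φ d)) d, h1]
    exact real_sq hφ d
  have h3 : φ (star (Ψ (Φ d)) * Ψ (Φ d)) ≤ φ (star d * d) := by
    calc φ (star (Ψ (Φ d)) * Ψ (Φ d)) ≤ φ (Ψ (star (Φ d) * Φ d)) := phi_mono hφ (hΨs.2 (Φ d))
    _ = φ (star (Φ d) * Φ d) := hstatΨ _
    _ = φ (star d * d) := h0
  have hx : φ (star (Ψ (Φ d) - d) * (Ψ (Φ d) - d)) = 0 := by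
    refine le_antisymm ?_ (hφ.2 _)
    have hexp : φ (star (Ψ (Φ d) - d) * (Ψ (Φ d) - d))
        = φ (star (Ψ (Φ d)) * Ψ (Φ d)) - φ (star (Ψ (Φ d)) * d)
          - φ (star d * Ψ (Φ d)) + φ (star d * d) := by
      simp only [star_sub, sub_mul, mul_sub, map_sub]
      ring
    rw [hexp, h1, h2]
    have : φ (star (Ψ (Φ d)) * Ψ (Φ d)) - φ (star d * d) - φ (star d * d) + φ (star d * d)
        = φ (star (Ψ (Φ d)) * Ψ (Φ d)) - φ (star d * d) := by ring
    rw [this]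
    exact sub_nonpos.2 h3
  exact sub_eq_zero.1 (hfaith _ hx)

lemma phiZ_nonneg_eq {k : ℤ} (h : 0 ≤ k) : phiZ Φ Ψ k = Φ ^ k.toNat := if_pos h

lemma phiZ_nonpos_eq {k : ℤ} (h : k ≤ 0) : phiZ Φ Ψ k = Ψ ^ (-k).toNat := by
  unfold phiZ
  split_ifs with h'
  · have hk : k = 0 := le_antisymm h h'
    subst hk; simp
  · rfl

lemma phiZ_succ {k : ℤ} (h : 0 ≤ k) : phiZ Φ Ψ (k + 1) = phiZ Φ Ψ k * Φ := by
  rw [phiZ_nonneg_eq (by omega), phiZ_nonneg_eq h,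
    show (k + 1).toNat = k.toNat + 1 by omega, pow_succ]

lemma phiZ_pred {k : ℤ} (h : k ≤ 0) : phiZ Φ Ψ (k - 1) = phiZ Φ Ψ k * Ψ := by
  rw [phiZ_nonpos_eq (by omega), phiZ_nonpos_eq h,
    show (-(k - 1)).toNat = (-k).toNat + 1 by omega, pow_succ]

lemma phiZ_one' : phiZ Φ Ψ 1 = Φ := by
  rw [phiZ_nonneg_eq (by omega)]
  norm_num

lemma phiZ_negone : phiZ Φ Ψ (-1) = Ψ := by
  rw [phiZ_nonpos_eq (by omega)]
  norm_num

lemma schwartz_one : IsSchwartz (1 : Module.End ℂ M) := ⟨rfl, fun _ => le_refl _⟩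

lemma schwartz_comp (hS : IsSchwartz S) (hT : IsSchwartz T) : IsSchwartz (S * T) := by
  constructor
  · show S (T 1) = 1
    rw [hT.1, hS.1]
  · intro a
    show star (S (T a)) * S (T a) ≤ S (T (star a * a))
    calc star (S (T a)) * S (T a) ≤ S (star (T a) * T a) := hS.2 (T a)
    _ ≤ S (T (star a * a)) := mono hS (hT.2 a)

lemma schwartz_pow (hT : IsSchwartz T) (n : ℕ) : IsSchwartz (T ^ n) := by
  induction n with
  | zero => rw [pow_zero]; exact schwartz_one
  | succ n ih => rw [pow_succ]; exact schwartz_comp ih hT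

lemma phiZ_schwartz (hΦs : IsSchwartz Φ) (hΨs : IsSchwartz Ψ) (k : ℤ) :
    IsSchwartz (phiZ Φ Ψ k) := by
  unfold phiZ
  split_ifs
  exacts [schwartz_pow hΦs _, schwartz_pow hΨs _]

lemma inv_pow (hstat : ∀ x : M, φ (T x) = φ x) : ∀ (n : ℕ) (x : M), φ ((T ^ n) x) = φ x := by
  intro n
  induction n with
  | zero => intro x; rw [pow_zero]; rfl
  | succ n ih => intro x; rw [pow_succ, Module.End.mul_apply, ih, hstat]

lemma phiZ_inv (hstat : ∀ x : M, φ (Φ x) = φ x) (hstatΨ : ∀ x : M, φ (Ψ x) = φ x)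
    (k : ℤ) (x : M) : φ (phiZ Φ Ψ k x) = φ x := by
  unfold phiZ
  split_ifs
  exacts [inv_pow hstat _ x, inv_pow hstatΨ _ x]

lemma G_combo (hφ : IsState φ) (hT : IsSchwartz T) (hTi : ∀ x, φ (T x) = φ x) {x y : M}
    (hx : φ (star (T x) * T x) = φ (star x * x))
    (hy : φ (star (T y) * T y) = φ (star y * y)) (t : ℂ) :
    φ (star (T (x + t • y)) * T (x + t • y)) = φ (star (x + t • y) * (x + t • y)) := by
  rw [map_add, map_smul, Bexp φ t (T x) (T y), Bexp φ t x y, hx, hy,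
    null hφ hT hTi hx y, null hφ hT hTi hy x]

lemma polar (x y : M) : star x * y = (4:ℂ)⁻¹ • ((star (x + (1:ℂ)•y) * (x + (1:ℂ)•y))
    + (-Complex.I) • (star (x + Complex.I•y) * (x + Complex.I•y))
    + (-1:ℂ) • (star (x + (-1:ℂ)•y) * (x + (-1:ℂ)•y))
    + Complex.I • (star (x + (-Complex.I)•y) * (x + (-Complex.I)•y))) := by
  simp only [star_add, star_smul, add_mul, mul_add, smul_mul_assoc, mul_smul_comm, smul_smul,
    smul_add, map_one, map_neg, Complex.conj_I]
  match_scalars <;> simp <;> ring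

end DinfAux


/-- `D_∞` is invariant under `Φ` and `Φ♯`, and the restriction of `Φ`
to `D_∞` is a *-automorphism whose inverse is the restriction of `Φ♯`. -/
theorem Dinf_reversible
    (Φ Ψ : Module.End ℂ M) (hΦ : IsSchwartz Φ) (hΨ : IsSchwartz Ψ)
    (φ : M →ₗ[ℂ] ℂ) (hφ : IsState φ) (hfaith : IsFaithful φ)
    (hstat : ∀ a : M, φ (Φ a) = φ a)
    (hadj : ∀ a b : M, φ (b * Φ a) = φ (Ψ b * a)) :
    (∀ d ∈ Dinf Φ Ψ, Φ d ∈ Dinf Φ Ψ) ∧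
    (∀ d ∈ Dinf Φ Ψ, Ψ d ∈ Dinf Φ Ψ) ∧
    (∀ d ∈ Dinf Φ Ψ, Φ (Ψ d) = d ∧ Ψ (Φ d) = d) ∧
    (∀ d ∈ Dinf Φ Ψ, ∀ e ∈ Dinf Φ Ψ, Φ (d * e) = Φ d * Φ e) ∧
    (∀ d ∈ Dinf Φ Ψ, Φ (star d) = star (Φ d)) := by
  classical
  have hstatPsi : ∀ x : M, φ (Ψ x) = φ x := by
    intro x
    have h := hadj 1 x
    rw [hΦ.1, mul_one, mul_one] at h
    exact h.symm
  have key0 : ∀ z : M, (starRingEnd ℂ) (φ (star z)) = φ z := by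
    intro z
    rw [DinfAux.herm hφ]
    exact Complex.conj_conj _
  have hadj' : ∀ a b : M, φ (b * Ψ a) = φ (Φ b * a) := by
    intro a b
    calc φ (b * Ψ a) = (starRingEnd ℂ) (φ (star (b * Ψ a))) := (key0 _).symm
    _ = (starRingEnd ℂ) (φ (Ψ (star a) * star b)) := by
        rw [star_mul, ← DinfAux.star_map hΨ]
    _ = (starRingEnd ℂ) (φ (star a * Φ (star b))) := by rw [← hadj (star b) (star a)]
    _ = (starRingEnd ℂ) (φ (star (Φ b * a))) := by rw [star_mul, ← DinfAux.star_map hΦ]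
    _ = φ (Φ b * a) := key0 _
  have hZs : ∀ k, IsSchwartz (phiZ Φ Ψ k) := DinfAux.phiZ_schwartz hΦ hΨ
  have hZi : ∀ k (x : M), φ (phiZ Φ Ψ k x) = φ x :=
    fun k x => DinfAux.phiZ_inv hstat hstatPsi k x
  have memD : ∀ a : M, a ∈ Dinf Φ Ψ ↔ ∀ k, a ∈ multDomain (phiZ Φ Ψ k) := by
    intro a
    rw [Dinf]
    exact Set.mem_iInter
  have good1 : ∀ (k) (a : M), a ∈ multDomain (phiZ Φ Ψ k) →
      φ (star (phiZ Φ Ψ k a) * phiZ Φ Ψ k a) = φ (star a * a) :=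
    fun k a ha => DinfAux.good_of_mem (hZs k) (hZi k) ha.1
  have mem_of : ∀ (k) (a : M),
      φ (star (phiZ Φ Ψ k a) * phiZ Φ Ψ k a) = φ (star a * a) →
      φ (star (phiZ Φ Ψ k (star a)) * phiZ Φ Ψ k (star a)) = φ (star (star a) * star a) →
      a ∈ multDomain (phiZ Φ Ψ k) := by
    intro k a h1 h2
    refine ⟨DinfAux.mem_of_good hφ hfaith (hZs k) (hZi k) h1, ?_⟩
    have h3 := DinfAux.mem_of_good hφ hfaith (hZs k) (hZi k) h2
    rwa [star_star] at h3
  have hstarD : ∀ d ∈ Dinf Φ Ψ, star d ∈ Dinf Φ Ψ := by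
    intro d hd
    rw [memD] at hd ⊢
    intro k
    obtain ⟨h1, h2⟩ := hd k
    constructor
    · simpa [star_star] using h2
    · simpa [star_star] using h1
  have hrev : ∀ d ∈ Dinf Φ Ψ, Ψ (Φ d) = d := by
    intro d hd
    have hm := (memD d).1 hd 1
    rw [DinfAux.phiZ_one'] at hm
    exact DinfAux.rev hφ hfaith hΦ hΨ hstat hstatPsi hadj hm.1
  have hrev' : ∀ d ∈ Dinf Φ Ψ, Φ (Ψ d) = d := by
    intro d hd
    have hm := (memD d).1 hd (-1)
    rw [DinfAux.phiZ_negone] at hm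
    exact DinfAux.rev hφ hfaith hΨ hΦ hstatPsi hstat hadj' hm.1
  have stepF : ∀ (a : M), Ψ (Φ a) = a → ∀ k : ℤ, phiZ Φ Ψ k (Φ a) = phiZ Φ Ψ (k + 1) a := by
    intro a hra k
    by_cases h : 0 ≤ k
    · rw [DinfAux.phiZ_succ h, Module.End.mul_apply]
    · have h1 : k + 1 ≤ 0 := by omega
      have h2 := DinfAux.phiZ_pred (Φ := Φ) (Ψ := Ψ) h1
      rw [show k + 1 - 1 = k by ring] at h2
      rw [h2, Module.End.mul_apply, hra]
  have stepP : ∀ (a : M), Φ (Ψ a) = a → ∀ k : ℤ, phiZ Φ Ψ k (Ψ a) = phiZ Φ Ψ (k - 1) a := by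
    intro a hra k
    by_cases h : k ≤ 0
    · rw [DinfAux.phiZ_pred h, Module.End.mul_apply]
    · have h1 : (0:ℤ) ≤ k - 1 := by omega
      have h2 := DinfAux.phiZ_succ (Φ := Φ) (Ψ := Ψ) h1
      rw [show k - 1 + 1 = k by ring] at h2
      rw [h2, Module.End.mul_apply, hra]
  have goodPhi : ∀ a : M, (∀ k, a ∈ multDomain (phiZ Φ Ψ k)) →
      φ (star (Φ a) * Φ a) = φ (star a * a) := by
    intro a ha
    have h := good1 1 a (ha 1)
    rwa [DinfAux.phiZ_one'] at h
  have goodPsi : ∀ a : M, (∀ k, a ∈ multDomain (phiZ Φ Ψ k)) →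
      φ (star (Ψ a) * Ψ a) = φ (star a * a) := by
    intro a ha
    have h := good1 (-1) a (ha (-1))
    rwa [DinfAux.phiZ_negone] at h
  have invF : ∀ d ∈ Dinf Φ Ψ, Φ d ∈ Dinf Φ Ψ := by
    intro d hd
    have hmem := (memD d).1 hd
    have hmems := (memD (star d)).1 (hstarD d hd)
    have hrevd : Ψ (Φ d) = d := hrev d hd
    have hrevsd : Ψ (Φ (star d)) = star d := hrev (star d) (hstarD d hd)
    rw [memD]
    intro k
    refine mem_of k (Φ d) ?_ ?_
    · rw [stepF d hrevd k, good1 (k + 1) d (hmem (k + 1))]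
      exact (goodPhi d hmem).symm
    · rw [show star (Φ d) = Φ (star d) from (DinfAux.star_map hΦ d).symm]
      rw [stepF (star d) hrevsd k, good1 (k + 1) (star d) (hmems (k + 1))]
      exact (goodPhi (star d) hmems).symm
  have invP : ∀ d ∈ Dinf Φ Ψ, Ψ d ∈ Dinf Φ Ψ := by
    intro d hd
    have hmem := (memD d).1 hd
    have hmems := (memD (star d)).1 (hstarD d hd)
    have hrevd : Φ (Ψ d) = d := hrev' d hd
    have hrevsd : Φ (Ψ (star d)) = star d := hrev' (star d) (hstarD d hd)
    rw [memD]
    intro k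
    refine mem_of k (Ψ d) ?_ ?_
    · rw [stepP d hrevd k, good1 (k - 1) d (hmem (k - 1))]
      exact (goodPsi d hmem).symm
    · rw [show star (Ψ d) = Ψ (star d) from (DinfAux.star_map hΨ d).symm]
      rw [stepP (star d) hrevsd k, good1 (k - 1) (star d) (hmems (k - 1))]
      exact (goodPsi (star d) hmems).symm
  have hmul : ∀ d ∈ Dinf Φ Ψ, ∀ e ∈ Dinf Φ Ψ, Φ (d * e) = Φ d * Φ e := by
    intro d hd e he
    have hGx : φ (star (Φ (star d)) * Φ (star d)) = φ (star (star d) * star d) :=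
      goodPhi (star d) ((memD (star d)).1 (hstarD d hd))
    have hGy : φ (star (Φ e) * Φ e) = φ (star e * e) := goodPhi e ((memD e).1 he)
    have key : ∀ t : ℂ, Φ (star (star d + t • e) * (star d + t • e))
        = star (Φ (star d) + t • Φ e) * (Φ (star d) + t • Φ e) := by
      intro t
      have hG := DinfAux.G_combo hφ hΦ hstat hGx hGy t
      have h1 := DinfAux.mem_of_good hφ hfaith hΦ hstat hG
      rw [h1, DinfAux.star_map hΦ, map_add, map_smul]
    have pol2 := DinfAux.polar (Φ (star d)) (Φ e)
    have hhead : star (Φ (star d)) = Φ d := by rw [DinfAux.star_map hΦ, star_star]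
    calc Φ (d * e) = Φ (star (star d) * e) := by rw [star_star]
    _ = Φ d * Φ e := by
        rw [DinfAux.polar (star d) e, map_smul]
        simp only [map_add, map_smul]
        rw [key 1, key Complex.I, key (-1), key (-Complex.I), ← pol2, hhead]
  exact ⟨invF, invP, fun d hd => ⟨hrev' d hd, hrev d hd⟩, hmul,
    fun d _ => DinfAux.star_map hΦ d⟩


end
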